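/- Let T > 0 and define p̂_x : ℝ₊ → ℝ₊ⁿ by p̂_x(t) = p_x(t) for 0 ≤ t < T, and p̂_x(t) = |e^{AT}| p̂_x(t−T) + ∫_{t−T}^{t} |e^{A(t−τ)} B| p_w(τ) dτ for t ≥ T, where p_x(t) = |e^{At}| p_x(0) + ∫₀ᵗ |e^{A(t−τ)} B| p_w(τ) dτ. Then p_x(t) ≤ p̂_x(t) componentwise for all t ≥ 0. -/

import Mathlib

noncomputable def entAbs {m n : ℕ} (A : Matrix (Fin m) (Fin n) ℝ) : Matrix (Fin m) (Fin n) ℝ :=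
  Matrix.of fun i j => |A i j|

namespace TruncAux

open NormedSpace MeasureTheory intervalIntegral

variable {n nw : ℕ}

lemma expCont (A : Matrix (Fin n) (Fin n) ℝ) :
    Continuous fun t : ℝ => NormedSpace.exp (t • A) := by
  letI : SeminormedRing (Matrix (Fin n) (Fin n) ℝ) := Matrix.linftyOpSemiNormedRing
  letI : NormedRing (Matrix (Fin n) (Fin n) ℝ) := Matrix.linftyOpNormedRing
  letI : NormedAlgebra ℝ (Matrix (Fin n) (Fin n) ℝ) := Matrix.linftyOpNormedAlgebra
  letI : NormedAlgebra ℚ (Matrix (Fin n) (Fin n) ℝ) := NormedAlgebra.restrictScalars ℚ ℝ _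
  exact NormedSpace.exp_continuous.comp (continuous_id.smul continuous_const)

lemma expSplit (A : Matrix (Fin n) (Fin n) ℝ) (s t : ℝ) :
    NormedSpace.exp ((s + t) • A) = NormedSpace.exp (s • A) * NormedSpace.exp (t • A) := by
  rw [add_smul]
  exact Matrix.exp_add_of_commute _ _ (((Commute.refl A).smul_left s).smul_right t)

lemma mv_apply {k : ℕ} (M : Matrix (Fin n) (Fin k) ℝ) (v : Fin k → ℝ) (i : Fin n) :
    (entAbs M).mulVec v i = ∑ j, |M i j| * v j := by
  simp [entAbs, Matrix.mulVec, dotProduct]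

lemma abs_mul_entry {k : ℕ} (M : Matrix (Fin n) (Fin n) ℝ) (N : Matrix (Fin n) (Fin k) ℝ)
    (i : Fin n) (j : Fin k) : |(M * N) i j| ≤ ∑ l, |M i l| * |N l j| := by
  rw [Matrix.mul_apply]
  exact (Finset.abs_sum_le_sum_abs _ _).trans (le_of_eq (by simp [abs_mul]))

/-- `fI A B pw t τ` is the integrand. -/
noncomputable def fI (A : Matrix (Fin n) (Fin n) ℝ) (B : Matrix (Fin n) (Fin nw) ℝ)
    (pw : ℝ → Fin nw → ℝ) (t τ : ℝ) : Fin n → ℝ :=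
  (entAbs (NormedSpace.exp ((t - τ) • A) * B)).mulVec (pw τ)

variable (A : Matrix (Fin n) (Fin n) ℝ) (B : Matrix (Fin n) (Fin nw) ℝ)
    (pw : ℝ → Fin nw → ℝ)

lemma entryCont (t : ℝ) (i : Fin n) (j : Fin nw) :
    Continuous fun τ => (NormedSpace.exp ((t - τ) • A) * B) i j :=
  (((expCont A).comp (continuous_const.sub continuous_id)).matrix_mul
    continuous_const).matrix_elem i j

lemma fI_meas (hpwmeas : ∀ i, Measurable fun τ => pw τ i) (t : ℝ) (i : Fin n) :
    Measurable fun τ => fI A B pw t τ i := by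
  simp only [fI, mv_apply]
  exact Finset.measurable_sum _ fun j _ =>
    ((entryCont A B t i j).abs.measurable).mul (hpwmeas j)

lemma fI_bdd (hpw : ∀ τ i, 0 ≤ pw τ i) {C : ℝ} (hC0 : 0 ≤ C) (hC : ∀ τ i, |pw τ i| ≤ C)
    (t a b : ℝ) :
    ∃ M, 0 ≤ M ∧ ∀ τ ∈ Set.uIcc a b, ∀ i, |fI A B pw t τ i| ≤ M := by
  have hcont : Continuous fun τ =>
      ∑ i : Fin n, ∑ j : Fin nw, |(NormedSpace.exp ((t - τ) • A) * B) i j| := by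
    refine continuous_finset_sum _ fun i _ => continuous_finset_sum _ fun j _ => ?_
    exact (entryCont A B t i j).abs
  obtain ⟨M, hM⟩ := isCompact_uIcc.exists_bound_of_continuousOn (s := Set.uIcc a b)
    hcont.continuousOn
  refine ⟨max M 0 * C, mul_nonneg (le_max_right _ _) hC0, fun τ hτ i => ?_⟩
  have h1 : fI A B pw t τ i
      = ∑ j, |(NormedSpace.exp ((t - τ) • A) * B) i j| * pw τ j := by rw [fI, mv_apply]
  rw [h1, abs_of_nonneg (Finset.sum_nonneg fun j _ => mul_nonneg (abs_nonneg _) (hpw τ j))]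
  have h2 : ∑ j, |(NormedSpace.exp ((t - τ) • A) * B) i j| ≤ M ⊔ 0 := by
    have h3 : ∑ j, |(NormedSpace.exp ((t - τ) • A) * B) i j|
        ≤ ∑ i' : Fin n, ∑ j, |(NormedSpace.exp ((t - τ) • A) * B) i' j| :=
      Finset.single_le_sum (f := fun i' => ∑ j, |(NormedSpace.exp ((t - τ) • A) * B) i' j|)
        (fun i' _ => Finset.sum_nonneg fun j _ => abs_nonneg _) (Finset.mem_univ i)
    refine h3.trans ((le_abs_self _).trans ?_)
    exact le_trans (le_of_eq (Real.norm_eq_abs _).symm) ((hM τ hτ).trans (le_max_left _ _))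
  calc ∑ j, |(NormedSpace.exp ((t - τ) • A) * B) i j| * pw τ j
      ≤ ∑ j, |(NormedSpace.exp ((t - τ) • A) * B) i j| * C :=
        Finset.sum_le_sum fun j _ =>
          mul_le_mul_of_nonneg_left ((le_abs_self _).trans (hC τ j)) (abs_nonneg _)
    _ = (∑ j, |(NormedSpace.exp ((t - τ) • A) * B) i j|) * C := (Finset.sum_mul _ _ _).symm
    _ ≤ (M ⊔ 0) * C := mul_le_mul_of_nonneg_right h2 hC0

lemma fI_intComp (hpwmeas : ∀ i, Measurable fun τ => pw τ i) (hpw : ∀ τ i, 0 ≤ pw τ i)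
    {C : ℝ} (hC0 : 0 ≤ C) (hC : ∀ τ i, |pw τ i| ≤ C) (t a b : ℝ) (i : Fin n) :
    IntervalIntegrable (fun τ => fI A B pw t τ i) volume a b := by
  obtain ⟨M, hM0, hM⟩ := fI_bdd A B pw hpw hC0 hC t a b
  refine (_root_.intervalIntegrable_const (c := M)).mono_fun
    (fI_meas A B pw hpwmeas t i).aestronglyMeasurable ?_
  filter_upwards [ae_restrict_mem measurableSet_uIoc] with τ hτ
  rw [Real.norm_eq_abs, Real.norm_eq_abs, abs_of_nonneg hM0]
  exact hM τ (Set.uIoc_subset_uIcc hτ) i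

lemma fI_intVec (hpwmeas : ∀ i, Measurable fun τ => pw τ i) (hpw : ∀ τ i, 0 ≤ pw τ i)
    {C : ℝ} (hC0 : 0 ≤ C) (hC : ∀ τ i, |pw τ i| ≤ C) (t a b : ℝ) :
    IntervalIntegrable (fun τ => fI A B pw t τ) volume a b := by
  obtain ⟨M, hM0, hM⟩ := fI_bdd A B pw hpw hC0 hC t a b
  refine (_root_.intervalIntegrable_const (c := M)).mono_fun
    (measurable_pi_lambda _ fun i => fI_meas A B pw hpwmeas t i).aestronglyMeasurable ?_
  filter_upwards [ae_restrict_mem measurableSet_uIoc] with τ hτ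
  rw [Real.norm_eq_abs, abs_of_nonneg hM0]
  refine (pi_norm_le_iff_of_nonneg hM0).2 fun i => ?_
  rw [Real.norm_eq_abs]
  exact hM τ (Set.uIoc_subset_uIcc hτ) i

lemma int_apply (hpwmeas : ∀ i, Measurable fun τ => pw τ i) (hpw : ∀ τ i, 0 ≤ pw τ i)
    {C : ℝ} (hC0 : 0 ≤ C) (hC : ∀ τ i, |pw τ i| ≤ C) (t a b : ℝ) (i : Fin n) :
    (∫ τ in a..b, fI A B pw t τ) i = ∫ τ in a..b, fI A B pw t τ i := by
  have := (ContinuousLinearMap.proj (R := ℝ) (φ := fun _ : Fin n => ℝ) i).intervalIntegral_comp_comm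
    (fI_intVec A B pw hpwmeas hpw hC0 hC t a b)
  simpa using this.symm

set_option maxHeartbeats 1000000 in
lemma keyStep (px0 : Fin n → ℝ) (hpx0 : ∀ i, 0 ≤ px0 i)
    (hpwmeas : ∀ i, Measurable fun τ => pw τ i) (hpw : ∀ τ i, 0 ≤ pw τ i)
    {C : ℝ} (hC0 : 0 ≤ C) (hC : ∀ τ i, |pw τ i| ≤ C)
    {T t : ℝ} (hTt : T ≤ t) (i : Fin n) :
    (entAbs (NormedSpace.exp (t • A))).mulVec px0 i + (∫ τ in (0:ℝ)..t, fI A B pw t τ) i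
      ≤ (entAbs (NormedSpace.exp (T • A))).mulVec
          ((entAbs (NormedSpace.exp ((t - T) • A))).mulVec px0
            + ∫ τ in (0:ℝ)..(t - T), fI A B pw (t - T) τ) i
        + (∫ τ in (t - T)..t, fI A B pw t τ) i := by
  set s := t - T with hs
  have hs0 : 0 ≤ s := by rw [hs]; linarith
  have hsplit : NormedSpace.exp (t • A)
      = NormedSpace.exp (T • A) * NormedSpace.exp (s • A) := by
    conv_lhs => rw [show t = T + s from by rw [hs]; ring]
    exact expSplit A T s
  have hsplit2 : ∀ τ : ℝ, NormedSpace.exp ((t - τ) • A) * B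
      = NormedSpace.exp (T • A) * (NormedSpace.exp ((s - τ) • A) * B) := by
    intro τ
    conv_lhs => rw [show t - τ = T + (s - τ) from by rw [hs]; ring]
    rw [expSplit, Matrix.mul_assoc]
  have hA : (entAbs (NormedSpace.exp (t • A))).mulVec px0 i
      ≤ (entAbs (NormedSpace.exp (T • A))).mulVec
          ((entAbs (NormedSpace.exp (s • A))).mulVec px0) i := by
    simp only [mv_apply]
    calc ∑ k, |NormedSpace.exp (t • A) i k| * px0 k
        ≤ ∑ k, (∑ l, |NormedSpace.exp (T • A) i l| * |NormedSpace.exp (s • A) l k|)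
            * px0 k := by
          refine Finset.sum_le_sum fun k _ => mul_le_mul_of_nonneg_right ?_ (hpx0 k)
          rw [hsplit]
          exact abs_mul_entry _ _ i k
      _ = ∑ l, |NormedSpace.exp (T • A) i l|
            * ∑ k, |NormedSpace.exp (s • A) l k| * px0 k := by
          simp only [Finset.sum_mul, Finset.mul_sum, mul_assoc]
          rw [Finset.sum_comm]
  have hptw : ∀ τ : ℝ, ∀ i' : Fin n, fI A B pw t τ i'
      ≤ ∑ l, |NormedSpace.exp (T • A) i' l| * fI A B pw s τ l := by
    intro τ i'
    simp only [fI, mv_apply]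
    calc ∑ j, |(NormedSpace.exp ((t - τ) • A) * B) i' j| * pw τ j
        ≤ ∑ j, (∑ l, |NormedSpace.exp (T • A) i' l|
            * |(NormedSpace.exp ((s - τ) • A) * B) l j|) * pw τ j := by
          refine Finset.sum_le_sum fun j _ => mul_le_mul_of_nonneg_right ?_ (hpw τ j)
          rw [hsplit2 τ]
          exact abs_mul_entry _ _ i' j
      _ = ∑ l, |NormedSpace.exp (T • A) i' l|
            * ∑ j, |(NormedSpace.exp ((s - τ) • A) * B) l j| * pw τ j := by
          simp only [Finset.sum_mul, Finset.mul_sum, mul_assoc]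
          rw [Finset.sum_comm]
  have hsplitInt : (∫ τ in (0:ℝ)..t, fI A B pw t τ) i
      = (∫ τ in (0:ℝ)..s, fI A B pw t τ) i + (∫ τ in s..t, fI A B pw t τ) i := by
    rw [← integral_add_adjacent_intervals (fI_intVec A B pw hpwmeas hpw hC0 hC t 0 s)
      (fI_intVec A B pw hpwmeas hpw hC0 hC t s t)]
    rfl
  have hB : (∫ τ in (0:ℝ)..s, fI A B pw t τ) i
      ≤ (entAbs (NormedSpace.exp (T • A))).mulVec (∫ τ in (0:ℝ)..s, fI A B pw s τ) i := by
    rw [int_apply A B pw hpwmeas hpw hC0 hC t 0 s i, mv_apply]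
    have hrhs : ∑ l, |NormedSpace.exp (T • A) i l| * (∫ τ in (0:ℝ)..s, fI A B pw s τ) l
        = ∫ τ in (0:ℝ)..s, ∑ l, |NormedSpace.exp (T • A) i l| * fI A B pw s τ l := by
      rw [intervalIntegral.integral_finset_sum (fun l _ =>
        (fI_intComp A B pw hpwmeas hpw hC0 hC s 0 s l).const_mul _)]
      refine Finset.sum_congr rfl fun l _ => ?_
      rw [int_apply A B pw hpwmeas hpw hC0 hC s 0 s l, intervalIntegral.integral_const_mul]
    rw [hrhs]
    have hgint : IntervalIntegrable
        (fun τ => ∑ l, |NormedSpace.exp (T • A) i l| * fI A B pw s τ l) volume 0 s := by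
      have h := IntervalIntegrable.sum
        (f := fun l τ => |NormedSpace.exp (T • A) i l| * fI A B pw s τ l) Finset.univ
        (fun l _ => (fI_intComp A B pw hpwmeas hpw hC0 hC s 0 s l).const_mul _)
      have he : (∑ l : Fin n, fun τ => |NormedSpace.exp (T • A) i l| * fI A B pw s τ l)
          = fun τ => ∑ l, |NormedSpace.exp (T • A) i l| * fI A B pw s τ l := by
        ext τ
        simp [Finset.sum_apply]
      rwa [he] at h
    exact intervalIntegral.integral_mono_on hs0
      (fI_intComp A B pw hpwmeas hpw hC0 hC t 0 s i) hgint (fun τ _ => hptw τ i)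
  rw [hsplitInt, Matrix.mulVec_add]
  simp only [Pi.add_apply]
  linarith [hA, hB]

end TruncAux

theorem truncated_overapproximation {n nw : ℕ}
    (A : Matrix (Fin n) (Fin n) ℝ) (B : Matrix (Fin n) (Fin nw) ℝ)
    (px0 : Fin n → ℝ) (hpx0 : ∀ i, 0 ≤ px0 i)
    (pw : ℝ → Fin nw → ℝ) (hpwmeas : ∀ i, Measurable fun τ => pw τ i)
    (hpwbdd : ∃ C, ∀ τ, ∀ i, |pw τ i| ≤ C) (hpw : ∀ τ, ∀ i, 0 ≤ pw τ i)
    (T : ℝ) (hT : 0 < T)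
    (px phat : ℝ → Fin n → ℝ)
    (hpx : ∀ t, px t = (entAbs (NormedSpace.exp (t • A))).mulVec px0
        + ∫ τ in (0:ℝ)..t, (entAbs (NormedSpace.exp ((t - τ) • A) * B)).mulVec (pw τ))
    (hphat_lt : ∀ t ∈ Set.Ico (0:ℝ) T, phat t = px t)
    (hphat_ge : ∀ t, T ≤ t → phat t = (entAbs (NormedSpace.exp (T • A))).mulVec (phat (t - T))
        + ∫ τ in (t - T)..t, (entAbs (NormedSpace.exp ((t - τ) • A) * B)).mulVec (pw τ)) :
    ∀ t : ℝ, 0 ≤ t → ∀ i, px t i ≤ phat t i := by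
  obtain ⟨C₀, hC₀⟩ := hpwbdd
  have hC0 : (0:ℝ) ≤ max C₀ 0 := le_max_right _ _
  have hC : ∀ τ i, |pw τ i| ≤ max C₀ 0 := fun τ i => (hC₀ τ i).trans (le_max_left _ _)
  have main : ∀ k : ℕ, ∀ t, 0 ≤ t → t < ((k : ℝ) + 1) * T → ∀ i, px t i ≤ phat t i := by
    intro k
    induction k with
    | zero =>
      intro t ht0 htlt i
      rw [hphat_lt t ⟨ht0, by simpa using htlt⟩]
    | succ k ih =>
      intro t ht0 htlt i
      by_cases hcase : t < T
      · rw [hphat_lt t ⟨ht0, hcase⟩]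
      · push_neg at hcase
        have hs0 : 0 ≤ t - T := by linarith
        have hslt : t - T < ((k : ℝ) + 1) * T := by
          push_cast at htlt
          linarith
        have hkey := TruncAux.keyStep A B pw px0 hpx0 hpwmeas hpw hC0 hC hcase i
        have hfinal : px t i ≤ (entAbs (NormedSpace.exp (T • A))).mulVec (px (t - T)) i
            + (∫ τ in (t - T)..t, TruncAux.fI A B pw t τ) i := by
          rw [hpx t, hpx (t - T)]
          exact hkey
        have hmono : (entAbs (NormedSpace.exp (T • A))).mulVec (px (t - T)) i
            ≤ (entAbs (NormedSpace.exp (T • A))).mulVec (phat (t - T)) i := by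
          simp only [TruncAux.mv_apply]
          exact Finset.sum_le_sum fun l _ =>
            mul_le_mul_of_nonneg_left (ih (t - T) hs0 hslt l) (abs_nonneg _)
        rw [hphat_ge t hcase]
        exact le_trans hfinal (add_le_add_left hmono _)
  intro t ht i
  obtain ⟨k, hk⟩ := Archimedean.arch t hT
  refine main k t ht ?_ i
  have hk' : t ≤ (k : ℝ) * T := by simpa [nsmul_eq_mul] using hk
  nlinarith [hT]
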